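/- Let Ω be a TC-space whose underlying space is Polish, let 𝒫 be an analytic and disintegrable control correspondence on Ω, let G be a tail random variable with ∫ G⁺ dμ < ∞ for every μ ∈ ⋃_ω 𝒫(ω), and let v(ω) = sup_{μ ∈ 𝒫(ω)} ∫ G dμ. Then for each ω ∈ Ω and each stopping time τ: v(ω) ≤ sup_{μ ∈ 𝒫(ω)} ∫ ( v(T_τ(ω')) · 1_{τ(ω') < ∞} + G(ω') · 1_{τ(ω') = ∞} ) μ(dω'), where the integral is taken with respect to the universal completion of μ. -/

import Mathlib

open MeasureTheory Set NNReal ENNReal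

/-- A T-space (truncated space): a filtered measurable space `(Ω, 𝓕, (𝓕ₜ)_{t ∈ [0,∞)})`
with `𝓕 = ⋁ₜ 𝓕ₜ`, equipped with a truncation family `(Tₜ)` such that `(t, ω) ↦ Tₜ ω` is
jointly measurable, `Tₜ ∘ Tₛ = T_{s ∧ t}` and `𝓕ₜ = σ(Tₜ)`. -/
structure TSpace (Ω : Type*) [mΩ : MeasurableSpace Ω] where
  filt : ℝ≥0 → MeasurableSpace Ω
  T : ℝ≥0 → Ω → Ω
  iSup_filt : (⨆ t : ℝ≥0, filt t) = mΩ
  meas_T : Measurable fun p : ℝ≥0 × Ω => T p.1 p.2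
  T_comp : ∀ (s t : ℝ≥0) (ω : Ω), T t (T s ω) = T (min s t) ω
  filt_eq : ∀ t : ℝ≥0, filt t = MeasurableSpace.comap (T t) mΩ

namespace TSpace

variable {Ω : Type*} [mΩ : MeasurableSpace Ω]

/-- Truncation indexed by extended times, with the convention `T_∞ = id`. -/
noncomputable def Te (X : TSpace Ω) (t : ℝ≥0∞) (ω : Ω) : Ω :=
  if t = ∞ then ω else X.T t.toNNReal ω

/-- A (raw) stopping time on a T-space: `{τ ≤ t} ∈ 𝓕ₜ` for all `t ∈ [0,∞)`. -/
def IsStoppingTime (X : TSpace Ω) (τ : Ω → ℝ≥0∞) : Prop :=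
  ∀ t : ℝ≥0, MeasurableSet[X.filt t] {ω | τ ω ≤ t}

/-- Truncation at a stopping time: `T_τ(ω) = T_{τ(ω)}(ω)`. -/
noncomputable def Tstop (X : TSpace Ω) (τ : Ω → ℝ≥0∞) (ω : Ω) : Ω :=
  X.Te (τ ω) ω

end TSpace

open MeasureTheory Set NNReal ENNReal

/-- The positive part of an extended-real number, as an element of `ℝ≥0∞`. -/
noncomputable def EReal.posPart (x : EReal) : ℝ≥0∞ :=
  if x = ⊤ then ⊤ else ENNReal.ofReal x.toReal

/-- The (possibly `-∞`-valued) integral `∫ G dμ = ∫ G⁺ dμ − ∫ G⁻ dμ` of an extended-real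
function, meaningful whenever `∫ G⁺ dμ < ∞`. -/
noncomputable def eIntegral {Ω : Type*} [MeasurableSpace Ω] (μ : Measure Ω)
    (G : Ω → EReal) : EReal :=
  ((∫⁻ ω, (G ω).posPart ∂μ : ℝ≥0∞) : EReal) - ((∫⁻ ω, (-(G ω)).posPart ∂μ : ℝ≥0∞) : EReal)

/-- A map is universally measurable if it is `μ`-null measurable (i.e. measurable for the
`μ`-completed σ-algebra) for every Borel probability measure `μ`. -/
def UnivMeasurable {α β : Type*} [MeasurableSpace α] [MeasurableSpace β] (f : α → β) : Prop :=
  ∀ μ : Measure α, IsProbabilityMeasure μ → NullMeasurable f μ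

/-- A (universally measurable) kernel from `α` to `Ω`: a family of Borel probability measures
`ν x` such that `x ↦ ν x B` is universally measurable for every Borel set `B`. -/
def IsUKernel {α Ω : Type*} [MeasurableSpace α] [MeasurableSpace Ω]
    (ν : α → ProbabilityMeasure Ω) : Prop :=
  ∀ B : Set Ω, MeasurableSet B → UnivMeasurable fun x => (ν x : Measure Ω) B

/-- A TC-space (truncation–concatenation space): a T-space together with a measurable
compatibility set `𝒞 ⊆ Ω × [0,∞) × Ω` and a concatenation operator `∗ : 𝒞 → Ω`
(extended arbitrarily off `𝒞`, measurable on `𝒞`) satisfying the compatibility and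
truncation axioms of Definition of TC-spaces. -/
structure TCSpace (Ω : Type*) [mΩ : MeasurableSpace Ω] extends TSpace Ω where
  Comp : Set (Ω × ℝ≥0 × Ω)
  meas_Comp : MeasurableSet Comp
  conc : Ω → ℝ≥0 → Ω → Ω
  meas_conc : Measurable fun p : Comp => conc (p : Ω × ℝ≥0 × Ω).1 (p : Ω × ℝ≥0 × Ω).2.1
      (p : Ω × ℝ≥0 × Ω).2.2
  comp_left : ∀ (ω : Ω) (t : ℝ≥0) (ω' : Ω), ((ω, t, ω') ∈ Comp ↔ (T t ω, t, ω') ∈ Comp)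
  comp_right : ∀ (ω : Ω) (t : ℝ≥0) (ω' : Ω) (s : ℝ≥0),
      ((ω, t, ω') ∈ Comp ↔ (ω, t, T s ω') ∈ Comp)
  conc_left : ∀ (ω : Ω) (t : ℝ≥0) (ω' : Ω), (ω, t, ω') ∈ Comp →
      conc ω t ω' = conc (T t ω) t ω'
  trunc_conc_le : ∀ (ω : Ω) (t : ℝ≥0) (ω' : Ω) (s : ℝ≥0), (ω, t, ω') ∈ Comp → s ≤ t →
      T s (conc ω t ω') = T s ω
  trunc_conc_gt : ∀ (ω : Ω) (t : ℝ≥0) (ω' : Ω) (s : ℝ≥0), (ω, t, ω') ∈ Comp → t < s →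
      T s (conc ω t ω') = conc ω t (T (s - t) ω')

namespace TCSpace

variable {Ω : Type*} [mΩ : MeasurableSpace Ω]

/-- Concatenation at an extended time, with the convention `ω ∗_∞ ω' = ω`. -/
noncomputable def concE (X : TCSpace Ω) (ω : Ω) (t : ℝ≥0∞) (ω' : Ω) : Ω :=
  if t = ∞ then ω else X.conc ω t.toNNReal ω'

/-- Extended compatibility: any two elements are compatible at `t = ∞`. -/
def CompE (X : TCSpace Ω) (ω : Ω) (t : ℝ≥0∞) (ω' : Ω) : Prop :=
  t = ∞ ∨ (ω, t.toNNReal, ω') ∈ X.Comp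

/-- A probability measure `μ` and a kernel `ν` are compatible at a stopping time `τ`:
`ν^{≤τ}_ω(𝒞_{ω,τ(ω)}) = 1` for `μ`-almost every `ω`. -/
def MeasCompatible (X : TCSpace Ω) (μ : Measure Ω) (ν : Ω → ProbabilityMeasure Ω)
    (τ : Ω → ℝ≥0∞) : Prop :=
  ∀ᵐ ω ∂μ, (ν (X.toTSpace.Tstop τ ω) : Measure Ω) {ω' | X.CompE ω (τ ω) ω'} = 1

/-- The concatenation `μ ∗_τ ν` of a measure and a kernel at a stopping time `τ`: the
pushforward of `μ(dω) ν^{≤τ}_ω(dω')` under `(ω, ω') ↦ ω ∗_{τ(ω)} ω'`. -/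
noncomputable def concMeasure (X : TCSpace Ω) (μ : Measure Ω)
    (ν : Ω → ProbabilityMeasure Ω) (τ : Ω → ℝ≥0∞) : Measure Ω :=
  μ.bind fun ω => Measure.map (fun ω' => X.concE ω (τ ω) ω') (ν (X.toTSpace.Tstop τ ω))

/-- A tail map: `G(ω ∗_t ω') = G(ω')` for all finite `t` and compatible pairs. -/
def IsTail (X : TCSpace Ω) (G : Ω → EReal) : Prop :=
  ∀ (t : ℝ≥0) (ω ω' : Ω), (ω, t, ω') ∈ X.Comp → G (X.conc ω t ω') = G ω'

end TCSpace

/-- A universally measurable selector of a control correspondence `P`. -/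
def IsSelector {Ω : Type*} [MeasurableSpace Ω] (P : Ω → Set (ProbabilityMeasure Ω))
    (ν : Ω → ProbabilityMeasure Ω) : Prop :=
  IsUKernel ν ∧ ∀ ω, ν ω ∈ P ω

/-- A control correspondence on a TC-space is concatenable if for every `ω`, `μ ∈ P ω`,
`P`-selector `ν` and stopping time `τ`, `ν` is compatible with `μ` at `τ` and
`μ ∗_τ ν ∈ P ω`. -/
def TCSpace.Concatenable {Ω : Type*} [MeasurableSpace Ω] (X : TCSpace Ω)
    (P : Ω → Set (ProbabilityMeasure Ω)) : Prop :=
  ∀ (ω : Ω) (μ : ProbabilityMeasure Ω), μ ∈ P ω →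
    ∀ ν : Ω → ProbabilityMeasure Ω, IsSelector P ν →
      ∀ τ : Ω → ℝ≥0∞, X.toTSpace.IsStoppingTime τ →
        X.MeasCompatible (μ : Measure Ω) ν τ ∧
          ∃ μ' ∈ P ω, (μ' : Measure Ω) = X.concMeasure (μ : Measure Ω) ν τ

/-- A control correspondence on a TC-space is disintegrable if for every `ω`, `μ ∈ P ω` and
stopping time `τ` there is a `P`-selector `ν`, compatible with `μ` at `τ`, with
`μ = μ ∗_τ ν`. -/
def TCSpace.Disintegrable {Ω : Type*} [MeasurableSpace Ω] (X : TCSpace Ω)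
    (P : Ω → Set (ProbabilityMeasure Ω)) : Prop :=
  ∀ (ω : Ω) (μ : ProbabilityMeasure Ω), μ ∈ P ω →
    ∀ τ : Ω → ℝ≥0∞, X.toTSpace.IsStoppingTime τ →
      ∃ ν : Ω → ProbabilityMeasure Ω, IsSelector P ν ∧
        X.MeasCompatible (μ : Measure Ω) ν τ ∧
          (μ : Measure Ω) = X.concMeasure (μ : Measure Ω) ν τ

/-! ### Auxiliary lemmas -/

section Aux

open Filter

lemma EReal.posPart_top' : (⊤ : EReal).posPart = ⊤ := if_pos rfl

lemma EReal.posPart_bot' : (⊥ : EReal).posPart = 0 := by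
  simp [EReal.posPart]

lemma EReal.posPart_coe' (r : ℝ) : (r : EReal).posPart = ENNReal.ofReal r := by
  simp [EReal.posPart]

lemma EReal.posPart_ne_top {x : EReal} (hx : x ≠ ⊤) : x.posPart ≠ ⊤ := by
  rw [EReal.posPart, if_neg hx]
  exact ENNReal.ofReal_ne_top

lemma EReal.measurable_posPart' : Measurable EReal.posPart := by
  unfold EReal.posPart
  exact Measurable.ite (measurableSet_singleton (⊤ : EReal)) measurable_const
    (ENNReal.measurable_ofReal.comp measurable_ereal_toReal)

/-- coercion of a finite `ℝ≥0∞` to `EReal` through `toReal`. -/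
lemma coe_ennreal_fin {a : ℝ≥0∞} (ha : a ≠ ⊤) : (a : EReal) = ((a.toReal : ℝ) : EReal) := by
  conv_lhs => rw [← ENNReal.ofReal_toReal ha]
  rw [EReal.coe_ennreal_ofReal, max_eq_left ENNReal.toReal_nonneg]

lemma ereal_sub_top (x : EReal) : x - ⊤ = ⊥ := by
  rw [sub_eq_add_neg, EReal.neg_top, EReal.add_bot]

lemma ereal_posPart_sub_negPart (x : EReal) :
    (x.posPart : EReal) - ((-x).posPart : EReal) ≤ x := by
  induction x using EReal.rec with
  | bot =>
    rw [EReal.posPart_bot', show -(⊥:EReal) = ⊤ from EReal.neg_bot, EReal.posPart_top', EReal.coe_ennreal_top, ereal_sub_top]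
  | top =>
    rw [EReal.posPart_top', EReal.coe_ennreal_top]
    exact le_top
  | coe r =>
    rw [EReal.posPart_coe', show (-(r : EReal)) = ((-r : ℝ) : EReal) by norm_cast,
      EReal.posPart_coe', EReal.coe_ennreal_ofReal, EReal.coe_ennreal_ofReal]
    have : (max r 0 : ℝ) - max (-r) 0 = r := by
      rcases le_total r 0 with h | h
      · rw [max_eq_right h, max_eq_left (by linarith)]; ring
      · rw [max_eq_left h, max_eq_right (by linarith)]; ring
    rw [show ((max r 0 : ℝ) : EReal) - ((max (-r) 0 : ℝ) : EReal) = (((max r 0 : ℝ) - max (-r) 0 : ℝ) : EReal) from (EReal.coe_sub _ _).symm, this]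

lemma ennreal_ofReal_max0 (x : ℝ) : ENNReal.ofReal x = ENNReal.ofReal (max x 0) := by
  rcases le_total x 0 with h | h
  · rw [ENNReal.ofReal_eq_zero.2 h, max_eq_right h, ENNReal.ofReal_zero]
  · rw [max_eq_left h]

lemma er_sub_le_sub {A B C D : ℝ≥0∞} (hA : A ≠ ⊤) (hC : C ≠ ⊤) (hD : D ≠ ⊤)
    (h : A + D ≤ B + C) : (A : EReal) - (B : EReal) ≤ (C : EReal) - (D : EReal) := by
  by_cases hB : B = ⊤
  · rw [hB, EReal.coe_ennreal_top, ereal_sub_top]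
    exact bot_le
  · have hh : A.toReal + D.toReal ≤ B.toReal + C.toReal := by
      rw [← ENNReal.toReal_add hA hD, ← ENNReal.toReal_add hB hC]
      exact ENNReal.toReal_mono (by simp [ENNReal.add_eq_top, hB, hC]) h
    rw [coe_ennreal_fin hA, coe_ennreal_fin hB, coe_ennreal_fin hC, coe_ennreal_fin hD,
      ← EReal.coe_sub, ← EReal.coe_sub, EReal.coe_le_coe_iff]
    linarith

lemma key_pt {a b : ℝ≥0∞} (ha : a ≠ ⊤) {x : EReal} (h : (a : EReal) - (b : EReal) ≤ x) :
    (a + (-x).posPart ≤ b + x.posPart) ∧ (-x).posPart ≤ b := by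
  by_cases hb : b = ⊤
  · subst hb
    exact ⟨by rw [top_add]; exact le_top, le_top⟩
  · induction x using EReal.rec with
    | bot =>
      exfalso
      rw [coe_ennreal_fin ha, coe_ennreal_fin hb, ← EReal.coe_sub, le_bot_iff] at h
      exact EReal.coe_ne_bot _ h
    | top =>
      rw [EReal.posPart_top', show -(⊤:EReal) = ⊥ from EReal.neg_top, EReal.posPart_bot']
      exact ⟨by simp, zero_le⟩
    | coe r =>
      rw [coe_ennreal_fin ha, coe_ennreal_fin hb, ← EReal.coe_sub, EReal.coe_le_coe_iff] at h
      rw [EReal.posPart_coe', show (-(r : EReal)) = ((-r : ℝ) : EReal) by norm_cast,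
        EReal.posPart_coe']
      constructor
      · conv_lhs => rw [← ENNReal.ofReal_toReal ha]
        conv_rhs => rw [← ENNReal.ofReal_toReal hb]
        rw [ennreal_ofReal_max0 (-r), ennreal_ofReal_max0 r,
          ← ENNReal.ofReal_add ENNReal.toReal_nonneg (le_max_right _ _),
          ← ENNReal.ofReal_add ENNReal.toReal_nonneg (le_max_right _ _)]
        apply ENNReal.ofReal_le_ofReal
        rcases le_total r 0 with hr | hr
        · rw [max_eq_left (by linarith), max_eq_right hr]; linarith
        · rw [max_eq_right (by linarith), max_eq_left hr]
          have := ENNReal.toReal_nonneg (a := b); linarith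
      · conv_rhs => rw [← ENNReal.ofReal_toReal hb]
        apply ENNReal.ofReal_le_ofReal
        have := ENNReal.toReal_nonneg (a := a); linarith

lemma bind_lintegral {Ω : Type*} [MeasurableSpace Ω] (μ : MeasureTheory.Measure Ω)
    (κ : Ω → MeasureTheory.Measure Ω) (hκ : AEMeasurable κ μ) {f : Ω → ℝ≥0∞}
    (hf : Measurable f) :
    ∫⁻ x, f x ∂(μ.bind κ) = ∫⁻ ω₁, ∫⁻ x, f x ∂(κ ω₁) ∂μ := by
  rw [MeasureTheory.Measure.bind, MeasureTheory.Measure.lintegral_join hf.aemeasurable,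
    MeasureTheory.lintegral_map' (MeasureTheory.Measure.measurable_lintegral hf).aemeasurable hκ]

lemma aemeasurable_of_bind_eq {Ω : Type*} [MeasurableSpace Ω] (μ : MeasureTheory.Measure Ω)
    [IsProbabilityMeasure μ] (κ : Ω → MeasureTheory.Measure Ω) (h : μ = μ.bind κ) :
    AEMeasurable κ μ := by
  by_contra hc
  rw [MeasureTheory.Measure.bind, MeasureTheory.Measure.map_of_not_aemeasurable hc,
    MeasureTheory.Measure.join_zero] at h
  exact IsProbabilityMeasure.ne_zero μ h

lemma comp_conc_measurable {Ω : Type*} [MeasurableSpace Ω] (X : TCSpace Ω) {B : Set Ω}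
    (hB : MeasurableSet B) :
    MeasurableSet {p : Ω × ℝ≥0 × Ω | p ∈ X.Comp ∧ X.conc p.1 p.2.1 p.2.2 ∈ B} := by
  have h1 : MeasurableSet
      ((fun p : X.Comp => X.conc (p : Ω × ℝ≥0 × Ω).1 (p : Ω × ℝ≥0 × Ω).2.1
        (p : Ω × ℝ≥0 × Ω).2.2) ⁻¹' B) := X.meas_conc hB
  have h2 := X.meas_Comp.subtype_image h1
  convert h2 using 1
  ext p
  simp only [Set.mem_image, Set.mem_setOf_eq, Set.mem_preimage]
  constructor
  · rintro ⟨hp, hpB⟩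
    exact ⟨⟨p, hp⟩, hpB, rfl⟩
  · rintro ⟨⟨q, hq⟩, hqB, rfl⟩
    exact ⟨hq, hqB⟩

end Aux

/-- (Disintegrable half of the abstract DPP.) If `P` is an analytic and
disintegrable control correspondence on a Polish TC-space and `G` is a `P`-upper
semi-integrable tail random variable, then for every `ω` and every stopping time `τ`,
`v(ω) ≤ sup_{μ ∈ P(ω)} ∫ (v ∘ T_τ) 1_{τ<∞} + G 1_{τ=∞} dμ`. -/
theorem stmt9 {Ω : Type*} [mΩ : MeasurableSpace Ω] [TopologicalSpace Ω] [PolishSpace Ω]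
    [BorelSpace Ω] (X : TCSpace Ω)
    (P : Ω → Set (ProbabilityMeasure Ω)) (hPne : ∀ ω, (P ω).Nonempty)
    (hPan : MeasureTheory.AnalyticSet {p : Ω × ProbabilityMeasure Ω | p.2 ∈ P p.1})
    (hPdis : X.Disintegrable P)
    (G : Ω → EReal) (hGu : UnivMeasurable G) (hGtail : X.IsTail G)
    (hGint : ∀ ω, ∀ μ ∈ P ω, (∫⁻ x, (G x).posPart ∂(μ : Measure Ω)) < ⊤)
    (v : Ω → EReal) (hv : ∀ ω, v ω = ⨆ μ ∈ P ω, eIntegral (μ : Measure Ω) G)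
    (ω : Ω) (τ : Ω → ℝ≥0∞) (hτ : X.toTSpace.IsStoppingTime τ) :
    v ω ≤ ⨆ μ ∈ P ω, eIntegral (μ : Measure Ω)
        fun ω' => if τ ω' < ⊤ then v (X.toTSpace.Tstop τ ω') else G ω' := by
  classical
  rw [hv ω]
  refine iSup₂_mono fun μ hμ => ?_
  set F : Ω → EReal := fun ω' => if τ ω' < ⊤ then v (X.toTSpace.Tstop τ ω') else G ω' with hFdef
  obtain ⟨ν, ⟨hνker, hνsel⟩, hcompat, hdis⟩ := hPdis ω μ hμ τ hτ
  set κ : Ω → Measure Ω := fun ω₁ =>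
    Measure.map (fun ω' => X.concE ω₁ (τ ω₁) ω')
      (ν (X.toTSpace.Tstop τ ω₁) : Measure Ω) with hκdef
  have hbind : (μ : Measure Ω) = (μ : Measure Ω).bind κ := hdis
  have hκae : AEMeasurable κ (μ : Measure Ω) := aemeasurable_of_bind_eq _ κ hbind
  obtain ⟨g, hgm, hgae⟩ := (hGu (μ : Measure Ω) inferInstance).aemeasurable
  set p : Ω → ℝ≥0∞ := fun x => (g x).posPart with hpdef
  set q : Ω → ℝ≥0∞ := fun x => (-(g x)).posPart with hqdef
  have hpm : Measurable p := EReal.measurable_posPart'.comp hgm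
  have hqm : Measurable q := EReal.measurable_posPart'.comp (continuous_neg.measurable.comp hgm)
  have hGp : (fun x => (G x).posPart) =ᵐ[(μ : Measure Ω)] p := hgae.fun_comp EReal.posPart
  have hGq : (fun x => (-(G x)).posPart) =ᵐ[(μ : Measure Ω)] q := by
    filter_upwards [hgae] with x hx
    simp only [hpdef, hqdef, hx]
  set Ip : Ω → ℝ≥0∞ := fun ω₁ => ∫⁻ x, p x ∂(κ ω₁) with hIpdef
  set Iq : Ω → ℝ≥0∞ := fun ω₁ => ∫⁻ x, q x ∂(κ ω₁) with hIqdef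
  have hIpae : AEMeasurable Ip (μ : Measure Ω) :=
    (Measure.measurable_lintegral hpm).comp_aemeasurable hκae
  have hIqae : AEMeasurable Iq (μ : Measure Ω) :=
    (Measure.measurable_lintegral hqm).comp_aemeasurable hκae
  have hAp : ∫⁻ x, (G x).posPart ∂(μ : Measure Ω) = ∫⁻ ω₁, Ip ω₁ ∂(μ : Measure Ω) := by
    rw [lintegral_congr_ae hGp]
    conv_lhs => rw [hbind]
    exact bind_lintegral _ κ hκae hpm
  have hBq : ∫⁻ x, (-(G x)).posPart ∂(μ : Measure Ω) = ∫⁻ ω₁, Iq ω₁ ∂(μ : Measure Ω) := by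
    rw [lintegral_congr_ae hGq]
    conv_lhs => rw [hbind]
    exact bind_lintegral _ κ hκae hqm
  have hA : ∫⁻ x, (G x).posPart ∂(μ : Measure Ω) ≠ ⊤ := (hGint ω μ hμ).ne
  -- the exceptional null set where `G` and `g` differ
  set N : Set Ω := toMeasurable (μ : Measure Ω) {x | G x ≠ g x} with hNdef
  have hNm : MeasurableSet N := measurableSet_toMeasurable _ _
  have hNμ : (μ : Measure Ω) N = 0 := by
    rw [hNdef, measure_toMeasurable]
    exact hgae
  have hGN : ∀ x, x ∉ N → G x = g x := by
    intro x hx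
    by_contra hne
    exact hx (subset_toMeasurable _ _ hne)
  have hκN : ∀ᵐ ω₁ ∂(μ : Measure Ω), κ ω₁ N = 0 := by
    have hbi := bind_lintegral (μ : Measure Ω) κ hκae (measurable_one.indicator hNm)
    rw [← hbind, lintegral_indicator_one hNm] at hbi
    simp_rw [lintegral_indicator_one hNm] at hbi
    have h0 : ∫⁻ ω₁, κ ω₁ N ∂(μ : Measure Ω) = 0 := by rw [← hbi, hNμ]
    exact (lintegral_eq_zero_iff'
      ((Measure.measurable_coe hNm).comp_aemeasurable hκae)).1 h0
  have hgtop : ∀ᵐ x ∂(μ : Measure Ω), g x ≠ ⊤ := by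
    have hfin : ∫⁻ x, p x ∂(μ : Measure Ω) ≠ ⊤ := by
      rw [← lintegral_congr_ae hGp]; exact hA
    filter_upwards [ae_lt_top hpm hfin] with x hx
    intro hgx
    rw [hpdef] at hx
    simp only [hgx, EReal.posPart_top', lt_self_iff_false] at hx
  -- key pointwise estimate
  have hpt : ∀ᵐ ω₁ ∂(μ : Measure Ω),
      Ip ω₁ ≠ ⊤ ∧ ((Ip ω₁ : EReal) - (Iq ω₁ : EReal) ≤ F ω₁) := by
    filter_upwards [hcompat, hκN, hgae, hgtop] with ω₁ hcomp1 hκN1 hGg1 hgt1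
    by_cases hτ1 : τ ω₁ = ⊤
    · -- τ = ∞ : the kernel is a Dirac mass
      have hconst : (fun ω' => X.concE ω₁ (τ ω₁) ω') = fun _ => ω₁ :=
        funext fun ω' => if_pos hτ1
      have hκ1 : κ ω₁ = Measure.dirac ω₁ := by
        rw [hκdef]
        simp only [hconst, Measure.map_const, measure_univ, one_smul]
      have hIp1 : Ip ω₁ = p ω₁ := by rw [hIpdef]; simp only [hκ1, lintegral_dirac]
      have hIq1 : Iq ω₁ = q ω₁ := by rw [hIqdef]; simp only [hκ1, lintegral_dirac]
      have hF1 : F ω₁ = G ω₁ := if_neg (by simp [hτ1])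
      refine ⟨?_, ?_⟩
      · rw [hIp1, hpdef]
        exact EReal.posPart_ne_top hgt1
      · rw [hIp1, hIq1, hF1, hGg1, hpdef, hqdef]
        exact ereal_posPart_sub_negPart (g ω₁)
    · -- τ < ∞ : the kernel is a genuine concatenation
      set t' : ℝ≥0 := (τ ω₁).toNNReal with ht'
      set νb : Measure Ω := (ν (X.toTSpace.Tstop τ ω₁) : Measure Ω) with hνb
      have hmk : Measurable fun ω' : Ω => (ω₁, t', ω') :=
        measurable_const.prodMk (measurable_const.prodMk measurable_id)
      have hC : MeasurableSet {ω' | (ω₁, t', ω') ∈ X.Comp} := hmk X.meas_Comp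
      have hcompE : {ω' | X.CompE ω₁ (τ ω₁) ω'} = {ω' | (ω₁, t', ω') ∈ X.Comp} := by
        ext ω'; simp [TCSpace.CompE, hτ1, ht']
      have hνbC : νb {ω' | (ω₁, t', ω') ∈ X.Comp} = 1 := by
        rw [hνb, ← hcompE]; exact hcomp1
      have haeC : ∀ᵐ ω' ∂νb, (ω₁, t', ω') ∈ X.Comp := by
        rw [ae_iff]
        have hcc := measure_compl hC (measure_ne_top νb _)
        rw [measure_univ, hνbC] at hcc
        simp at hcc; exact hcc
      -- a measurable modification of the section of the concatenation map
      set hfn : Ω → Ω :=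
        fun ω' => if (ω₁, t', ω') ∈ X.Comp then X.conc ω₁ t' ω' else ω₁ with hhfn
      have hhm : Measurable hfn := by
        intro B hB
        have hsec : MeasurableSet {ω' | (ω₁, t', ω') ∈ X.Comp ∧ X.conc ω₁ t' ω' ∈ B} :=
          hmk (comp_conc_measurable X hB)
        have heq : hfn ⁻¹' B =
            {ω' | (ω₁, t', ω') ∈ X.Comp ∧ X.conc ω₁ t' ω' ∈ B} ∪
              ({ω' | (ω₁, t', ω') ∈ X.Comp}ᶜ ∩ {_ω' : Ω | ω₁ ∈ B}) := by
          ext ω'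
          by_cases hcc : (ω₁, t', ω') ∈ X.Comp <;>
            simp [hhfn, hcc, Set.mem_preimage, Set.mem_setOf_eq]
        rw [heq]
        exact hsec.union (hC.compl.inter (MeasurableSet.const _))
      have haeconc : AEMeasurable (X.conc ω₁ t') νb := by
        refine hhm.aemeasurable.congr ?_
        filter_upwards [haeC] with ω' h1
        simp [hhfn, h1]
      have hconcE : (fun ω' => X.concE ω₁ (τ ω₁) ω') = X.conc ω₁ t' := by
        funext ω'
        rw [TCSpace.concE, if_neg hτ1]
      have hκ1 : κ ω₁ = Measure.map (X.conc ω₁ t') νb := by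
        rw [hκdef]
        simp only [hconcE, hνb]
      have hνbN : νb (X.conc ω₁ t' ⁻¹' N) = 0 := by
        rw [← Measure.map_apply_of_aemeasurable haeconc hNm, ← hκ1]; exact hκN1
      have haeN : ∀ᵐ ω' ∂νb, X.conc ω₁ t' ω' ∉ N := by
        rw [ae_iff]
        simpa using (show νb {a | X.conc ω₁ t' a ∈ N} = 0 from hνbN)
      have hIpeq : Ip ω₁ = ∫⁻ x, (G x).posPart ∂νb := by
        rw [hIpdef]
        simp only [hκ1]
        rw [lintegral_map' hpm.aemeasurable haeconc]
        refine lintegral_congr_ae ?_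
        filter_upwards [haeC, haeN] with ω' h1 h2
        rw [hpdef]
        simp only []
        rw [← hGN _ h2, hGtail t' ω₁ ω' h1]
      have hIqeq : Iq ω₁ = ∫⁻ x, (-(G x)).posPart ∂νb := by
        rw [hIqdef]
        simp only [hκ1]
        rw [lintegral_map' hqm.aemeasurable haeconc]
        refine lintegral_congr_ae ?_
        filter_upwards [haeC, haeN] with ω' h1 h2
        rw [hqdef]
        simp only []
        rw [← hGN _ h2, hGtail t' ω₁ ω' h1]
      have hmem : ν (X.toTSpace.Tstop τ ω₁) ∈ P (X.toTSpace.Tstop τ ω₁) := hνsel _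
      refine ⟨?_, ?_⟩
      · rw [hIpeq, hνb]
        exact (hGint _ _ hmem).ne
      · have hF1 : F ω₁ = v (X.toTSpace.Tstop τ ω₁) := if_pos (lt_top_iff_ne_top.2 hτ1)
        rw [hIpeq, hIqeq, hF1, hv (X.toTSpace.Tstop τ ω₁)]
        exact le_iSup₂ (f := fun μ' (_ : μ' ∈ P (X.toTSpace.Tstop τ ω₁)) =>
          eIntegral (μ' : Measure Ω) G) (ν (X.toTSpace.Tstop τ ω₁)) hmem
  -- final arithmetic
  have hkey := hpt.mono fun ω₁ h => key_pt h.1 h.2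
  show eIntegral (μ : Measure Ω) G ≤ eIntegral (μ : Measure Ω) F
  simp only [eIntegral]
  rw [hAp, hBq]
  by_cases hD : ∫⁻ x, (-(F x)).posPart ∂(μ : Measure Ω) = ⊤
  · have hBtop : ∫⁻ ω₁, Iq ω₁ ∂(μ : Measure Ω) = ⊤ := by
      rw [eq_top_iff, ← hD]
      exact lintegral_mono_ae (hkey.mono fun ω₁ h => h.2)
    rw [hBtop, EReal.coe_ennreal_top, ereal_sub_top]
    exact bot_le
  · by_cases hCt : ∫⁻ x, (F x).posPart ∂(μ : Measure Ω) = ⊤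
    · rw [hCt, EReal.coe_ennreal_top]
      have htop : (⊤ : EReal) - ((∫⁻ x, (-(F x)).posPart ∂(μ : Measure Ω) : ℝ≥0∞) : EReal)
          = ⊤ := by
        rw [coe_ennreal_fin hD, sub_eq_add_neg, ← EReal.coe_neg,
          EReal.top_add_of_ne_bot (EReal.coe_ne_bot _)]
      rw [htop]
      exact le_top
    · have hIA : ∫⁻ ω₁, Ip ω₁ ∂(μ : Measure Ω) ≠ ⊤ := by rw [← hAp]; exact hA
      apply er_sub_le_sub hIA hCt hD
      calc ∫⁻ ω₁, Ip ω₁ ∂(μ : Measure Ω) + ∫⁻ x, (-(F x)).posPart ∂(μ : Measure Ω)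
          = ∫⁻ ω₁, (Ip ω₁ + (-(F ω₁)).posPart) ∂(μ : Measure Ω) :=
            (lintegral_add_left' hIpae _).symm
        _ ≤ ∫⁻ ω₁, (Iq ω₁ + (F ω₁).posPart) ∂(μ : Measure Ω) :=
            lintegral_mono_ae (hkey.mono fun ω₁ h => h.1)
        _ = ∫⁻ ω₁, Iq ω₁ ∂(μ : Measure Ω) + ∫⁻ x, (F x).posPart ∂(μ : Measure Ω) :=
            lintegral_add_left' hIqae _
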